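/- Let {P_j(s)} be a 1S family and let PR_j(s,0) ∈ ℝ^{N−j+1} (1 ≤ j ≤ N, s ∈ ℕ) satisfy the (·,0)-system. Assume I_N − D_1(0) is invertible, define HR_2 = I_{N−1} − (1−δ_{2,N})D_2(0) and, for 3 ≤ j ≤ N, HR_j = I_{N−j+1} − (1−δ_{j,N})D_j(0) − D_{j−1}(1)·HR_{j−1}^{−1}·D_j(2), and assume each HR_j (2 ≤ j ≤ N) is invertible. For s ∈ ℕ define hR_2(s,0) = HR_2^{−1}·(δ_{s,0}pR_2 + (1−δ_{s,0})E_2·P_1(s−1) + D_1(1)·PR_1(s,0)) and, for 3 ≤ j ≤ N, hR_j(s,0) = HR_j^{−1}·(δ_{s,0}pR_j + (1−δ_{s,0})E_j·P_{j−1}(s−1) + D_{j−1}(1)·hR_{j−1}(s,0)). Then for every s ∈ ℕ: PR_1(s,0) = (I_N − D_1(0))^{−1}·(δ_{s,0}pR_1 + (1−δ_{s,0})E_1·P_0(s−1)), and for 2 ≤ j ≤ N: PR_j(s,0) = hR_j(s,0) + (1−δ_{j,N})·HR_j^{−1}·D_{j+1}(2)·PR_{j+1}(s,0). -/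
import Mathlib


open Matrix

noncomputable section

/-- The model parameters of the two-strain hospital-ward Markov chain. -/
structure ModelParams where
  β : ℝ
  μ : ℝ
  γ : ℝ
  τ1 : ℝ
  τ2 : ℝ
  m : ℝ
  c : ℝ

/-- Positivity/range conditions on the parameters. -/
def ModelParams.Valid (π : ModelParams) : Prop :=
  0 < π.β ∧ 0 < π.μ ∧ 0 < π.γ ∧ 0 < π.τ1 ∧ 0 < π.τ2 ∧
    π.m ∈ Set.Ioo (0:ℝ) 1 ∧ π.c ∈ Set.Ioo (0:ℝ) 1

/-- The total exit rate `q(i,j)` of state `(i,j)`. -/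
def qr (N : ℕ) (π : ModelParams) (i j : ℕ) : ℝ :=
  ((N : ℝ) - i) * (((i : ℝ) - j * π.c) * π.β + π.m * π.μ)
    + ((i : ℝ) - j) * (π.γ + π.τ1 + π.τ2 + (1 - π.m) * π.μ)
    + (j : ℝ) * (π.γ + π.τ2 + π.μ)

/-- The matrix `B_j` (Appendix A/B; `B_0` for `j = 0`), 0-based indexing: the 1-based
row index `i` corresponds to `k + 1` for `k : Fin (N - j)`. -/
def Bm (N : ℕ) (π : ModelParams) (j : ℕ) : Matrix (Fin (N - j)) (Fin (N - j)) ℝ :=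
  fun k l =>
    if (l : ℕ) = (k : ℕ) then π.m * π.μ / qr N π (j + (k : ℕ) + 1) j
    else if (l : ℕ) = (k : ℕ) + 1 then
      ((N : ℝ) - j - ((k : ℕ) + 1)) * π.β / qr N π (j + (k : ℕ) + 1) j
    else 0

/-- The matrix `C_j(0)` (Appendix A/B; `C_0(0)` for `j = 0`). -/
def Cm0 (N : ℕ) (π : ModelParams) (j : ℕ) : Matrix (Fin (N - j)) (Fin (N - j)) ℝ :=
  fun k l =>
    if (l : ℕ) + 1 = (k : ℕ) then
      ((k : ℕ) : ℝ) * (π.γ + π.τ1 + π.τ2 + (1 - π.m) * π.μ) / qr N π (j + (k : ℕ) + 1) j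
    else if (l : ℕ) = (k : ℕ) then
      (((N : ℝ) - j - ((k : ℕ) + 1)) * (1 - π.m) * π.μ + ((k : ℕ) : ℝ) * π.m * π.μ)
        / qr N π (j + (k : ℕ) + 1) j
    else if (l : ℕ) = (k : ℕ) + 1 then
      ((N : ℝ) - j - ((k : ℕ) + 1)) * (((k : ℕ) : ℝ) * π.β + π.m * π.μ)
        / qr N π (j + (k : ℕ) + 1) j
    else 0

/-- The matrix `C_{j-1}(1)` (Appendix B), of dimension `(N-j) × (N-(j-1))`. -/
def Cm1 (N : ℕ) (π : ModelParams) (j : ℕ) :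
    Matrix (Fin (N - j)) (Fin (N - (j - 1))) ℝ :=
  fun k l =>
    if (l : ℕ) = (k : ℕ) then
      (j : ℝ) * (π.γ + π.τ2 + (1 - π.m) * π.μ) / qr N π (j + (k : ℕ) + 1) j
    else if (l : ℕ) = (k : ℕ) + 1 then
      (j : ℝ) * π.m * π.μ / qr N π (j + (k : ℕ) + 1) j
    else 0

/-- The matrix `C_{j+1}(2)` (Appendix B), of dimension `(N-j) × (N-(j+1))`. -/
def Cm2 (N : ℕ) (π : ModelParams) (j : ℕ) :
    Matrix (Fin (N - j)) (Fin (N - (j + 1))) ℝ :=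
  fun k l =>
    if (l : ℕ) = (k : ℕ) then
      ((N : ℝ) - j - ((k : ℕ) + 1)) * j * (1 - π.c) * π.β / qr N π (j + (k : ℕ) + 1) j
    else 0

/-- The vector `p_{j,1_S}` (Appendix A/B). -/
def pS (N : ℕ) (π : ModelParams) (j : ℕ) : Fin (N - j) → ℝ :=
  fun k => (π.γ + π.τ1 + π.τ2 + (1 - π.m) * π.μ) / qr N π (j + (k : ℕ) + 1) j

/-- The matrix `E_j` (Appendix C), diagonal, of dimension `(N-j+1) × (N-(j-1))`;
the 1-based row index `k` corresponds to state `(j-1+k, j)`. -/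
def Em (N : ℕ) (π : ModelParams) (j : ℕ) :
    Matrix (Fin (N - j + 1)) (Fin (N - (j - 1))) ℝ :=
  fun k l =>
    if (l : ℕ) = (k : ℕ) then π.m * π.μ / qr N π (j + (k : ℕ)) j else 0

/-- The matrix `F_j` (Appendix C), of dimension `(N-j+1) × (N-j)`. -/
def Fm (N : ℕ) (π : ModelParams) (j : ℕ) :
    Matrix (Fin (N - j + 1)) (Fin (N - (j + 1) + 1)) ℝ :=
  fun k l =>
    if (l : ℕ) = (k : ℕ) then
      ((N : ℝ) - j - (k : ℕ)) * (1 - π.c) * π.β / qr N π (j + (k : ℕ)) j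
    else 0

/-- The matrix `D_j(0)` (Appendix C). -/
def Dm0 (N : ℕ) (π : ModelParams) (j : ℕ) :
    Matrix (Fin (N - j + 1)) (Fin (N - j + 1)) ℝ :=
  fun k l =>
    if (l : ℕ) + 1 = (k : ℕ) then
      ((k : ℕ) : ℝ) * (π.γ + π.τ1 + π.τ2 + (1 - π.m) * π.μ) / qr N π (j + (k : ℕ)) j
    else if (l : ℕ) = (k : ℕ) then
      (((N : ℝ) - j - (k : ℕ)) * (1 - π.m) * π.μ + ((k : ℕ) : ℝ) * π.m * π.μ)
        / qr N π (j + (k : ℕ)) j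
    else if (l : ℕ) = (k : ℕ) + 1 then
      ((N : ℝ) - j - (k : ℕ)) * (((k : ℕ) : ℝ) * π.β + π.m * π.μ) / qr N π (j + (k : ℕ)) j
    else 0

/-- The matrix `D_{j-1}(1)` (Appendix C), of dimension `(N-j+1) × (N-j+2)`. -/
def Dm1 (N : ℕ) (π : ModelParams) (j : ℕ) :
    Matrix (Fin (N - j + 1)) (Fin (N - (j - 1) + 1)) ℝ :=
  fun k l =>
    if (l : ℕ) = (k : ℕ) then
      ((j : ℝ) - 1) * (π.γ + π.τ2 + (1 - π.m) * π.μ) / qr N π (j + (k : ℕ)) j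
    else if (l : ℕ) = (k : ℕ) + 1 then
      ((j : ℝ) - 1) * π.m * π.μ / qr N π (j + (k : ℕ)) j
    else 0

/-- The matrix `D_{j+1}(2)` (Appendix C), of dimension `(N-j+1) × (N-j)`. -/
def Dm2 (N : ℕ) (π : ModelParams) (j : ℕ) :
    Matrix (Fin (N - j + 1)) (Fin (N - (j + 1) + 1)) ℝ :=
  fun k l =>
    if (l : ℕ) = (k : ℕ) then
      ((N : ℝ) - j - (k : ℕ)) * ((j : ℝ) - 1) * (1 - π.c) * π.β / qr N π (j + (k : ℕ)) j
    else 0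

/-- The vector `p_{j,1_R}` (Section 3.2). -/
def pR (N : ℕ) (π : ModelParams) (j : ℕ) : Fin (N - j + 1) → ℝ :=
  fun k => (π.γ + π.τ2 + (1 - π.m) * π.μ) / qr N π (j + (k : ℕ)) j

/-- The `1S` first-step system (equations (1)–(4) of the paper) for the family of
conditional-probability vectors `P j s = P_{j,1_S}(s)`, `0 ≤ j ≤ N−1`. -/
def OneSSystem (N : ℕ) (π : ModelParams)
    (P : (j : ℕ) → ℕ → Fin (N - j) → ℝ) : Prop :=
  IsUnit (1 - Cm0 N π 0) ∧
  (∀ s : ℕ, P 0 s = (1 - Cm0 N π 0)⁻¹.mulVec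
      (if s = 0 then pS N π 0 else (Bm N π 0).mulVec (P 0 (s - 1)))) ∧
  (∀ j s : ℕ, j + 1 ≤ N - 1 →
    P (j + 1) s
      = (if s = 0 then pS N π (j + 1) else (Bm N π (j + 1)).mulVec (P (j + 1) (s - 1)))
        + (Cm1 N π (j + 1)).mulVec (P j s)
        + (if j + 1 = N - 1 then 0 else
            (Cm0 N π (j + 1)).mulVec (P (j + 1) s)
              + (Cm2 N π (j + 1)).mulVec (P (j + 2) s)))

/-- The `(·,0)`-system (Theorem 2 of the paper) for the vectors
`PR j s = P_{j,1_R}(s,0)`, `1 ≤ j ≤ N`, coupled with a `1S` family `P`. -/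
def RZeroSystem (N : ℕ) (π : ModelParams)
    (P : (j : ℕ) → ℕ → Fin (N - j) → ℝ)
    (PR : (j : ℕ) → ℕ → Fin (N - j + 1) → ℝ) : Prop :=
  (∀ s : ℕ, PR 1 s = (Dm0 N π 1).mulVec (PR 1 s)
      + (if s = 0 then pR N π 1 else (Em N π 1).mulVec (P 0 (s - 1)))) ∧
  (∀ j s : ℕ, 1 ≤ j → j + 1 ≤ N →
    PR (j + 1) s
      = (if s = 0 then pR N π (j + 1) else (Em N π (j + 1)).mulVec (P j (s - 1)))
        + (Dm1 N π (j + 1)).mulVec (PR j s)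
        + (if j + 1 = N then 0 else
            (Dm0 N π (j + 1)).mulVec (PR (j + 1) s)
              + (Dm2 N π (j + 1)).mulVec (PR (j + 2) s)))

/-- The `(·,r)`-system for `r ≥ 1` (Theorem 3 of the paper) for the vectors
`PR j s r = P_{j,1_R}(s,r)`, `1 ≤ j ≤ N`. -/
def RPosSystem (N : ℕ) (π : ModelParams)
    (PR : (j : ℕ) → ℕ → ℕ → Fin (N - j + 1) → ℝ) : Prop :=
  (∀ s r : ℕ, PR 1 s (r + 1) = (Dm0 N π 1).mulVec (PR 1 s (r + 1))
      + (Fm N π 1).mulVec (PR 2 s r)) ∧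
  (∀ j s r : ℕ, 1 ≤ j → j + 1 ≤ N →
    PR (j + 1) s (r + 1)
      = (if j + 1 = N then 0 else (Fm N π (j + 1)).mulVec (PR (j + 2) s r))
        + (Dm1 N π (j + 1)).mulVec (PR j s (r + 1))
        + (if j + 1 = N then 0 else
            (Dm0 N π (j + 1)).mulVec (PR (j + 1) s (r + 1))
              + (Dm2 N π (j + 1)).mulVec (PR (j + 2) s (r + 1))))


private lemma solve_mulVec {n : ℕ} {M : Matrix (Fin n) (Fin n) ℝ} (h : IsUnit M)
    {x y : Fin n → ℝ} (hx : M.mulVec x = y) : x = M⁻¹.mulVec y := by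
  subst hx
  rw [Matrix.mulVec_mulVec,
    Matrix.nonsing_inv_mul _ ((Matrix.isUnit_iff_isUnit_det M).mp h), Matrix.one_mulVec]

/-- **Theorem 2 of the paper.** Block-Gaussian elimination solution of the
`(·,0)`-system coupled with a `1S` family:
`P_{1,1_R}(s,0) = (I − D₁(0))⁻¹(δ_{s,0} p_{1,1_R} + (1−δ_{s,0}) E₁ P_{0,1_S}(s−1))` and
`P_{j,1_R}(s,0) = h_{j,1_R}(s,0) + (1−δ_{j,N}) H_{j,1_R}⁻¹ D_{j+1}(2) P_{j+1,1_R}(s,0)`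
for `2 ≤ j ≤ N`. -/
theorem rZero_block_elimination
    (N : ℕ) (hN : 2 ≤ N) (π : ModelParams) (hπ : π.Valid)
    (P : (j : ℕ) → ℕ → Fin (N - j) → ℝ)
    (hP : OneSSystem N π P)
    (PR : (j : ℕ) → ℕ → Fin (N - j + 1) → ℝ)
    (hPR : RZeroSystem N π P PR)
    (hD1inv : IsUnit (1 - Dm0 N π 1))
    (HR : (j : ℕ) → Matrix (Fin (N - j + 1)) (Fin (N - j + 1)) ℝ)
    (hHR2 : HR 2 = 1 - (if 2 = N then 0 else Dm0 N π 2))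
    (hHRrec : ∀ j : ℕ, 2 ≤ j → j + 1 ≤ N →
      HR (j + 1) = 1 - (if j + 1 = N then 0 else Dm0 N π (j + 1))
        - (show Matrix (Fin (N - (j + 1) + 1)) (Fin (N - j + 1)) ℝ from Dm1 N π (j + 1))
            * (HR j)⁻¹ * Dm2 N π j)
    (hHRinv : ∀ j : ℕ, 2 ≤ j → j ≤ N → IsUnit (HR j))
    (hv : (j : ℕ) → ℕ → Fin (N - j + 1) → ℝ)
    (hv2 : ∀ s : ℕ, hv 2 s = (HR 2)⁻¹.mulVec
      ((if s = 0 then pR N π 2 else (Em N π 2).mulVec (P 1 (s - 1)))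
        + (Dm1 N π 2).mulVec (PR 1 s)))
    (hvrec : ∀ j s : ℕ, 2 ≤ j → j + 1 ≤ N →
      hv (j + 1) s = (HR (j + 1))⁻¹.mulVec
        ((if s = 0 then pR N π (j + 1) else (Em N π (j + 1)).mulVec (P j (s - 1)))
          + (Dm1 N π (j + 1)).mulVec (hv j s))) :
    (∀ s : ℕ, PR 1 s = (1 - Dm0 N π 1)⁻¹.mulVec
      (if s = 0 then pR N π 1 else (Em N π 1).mulVec (P 0 (s - 1)))) ∧
    ∀ s j : ℕ, 2 ≤ j → j ≤ N →
      PR j s = hv j s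
        + (if j = N then 0 else ((HR j)⁻¹ * Dm2 N π j).mulVec (PR (j + 1) s)) := by
  constructor
  · intro s
    apply solve_mulVec hD1inv
    rw [Matrix.sub_mulVec, Matrix.one_mulVec]
    nth_rewrite 1 [hPR.1 s]
    abel
  · intro s j hj
    induction j, hj using Nat.le_induction with
    | base =>
      intro h2N
      have hsys := hPR.2 1 s le_rfl hN
      have hinv := hHRinv 2 le_rfl h2N
      have key : (HR 2).mulVec (PR 2 s)
          = ((if s = 0 then pR N π 2 else (Em N π 2).mulVec (P 1 (s - 1)))
              + (Dm1 N π 2).mulVec (PR 1 s))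
            + (if 2 = N then 0 else (Dm2 N π 2).mulVec (PR 3 s)) := by
        rw [hHR2, Matrix.sub_mulVec, Matrix.one_mulVec]
        by_cases h2 : 2 = N
        · simp only [if_pos h2] at hsys ⊢
          rw [Matrix.zero_mulVec]
          nth_rewrite 1 [hsys]
          abel
        · simp only [if_neg h2] at hsys ⊢
          nth_rewrite 1 [hsys]
          abel
      rw [solve_mulVec hinv key, Matrix.mulVec_add, ← hv2 s]
      congr 1
      by_cases h2 : 2 = N
      · simp [h2]
      · simp only [if_neg h2, ← Matrix.mulVec_mulVec]
    | succ j hj ih =>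
      intro hjN
      have hjN' : j ≤ N := by omega
      have hjneN : j ≠ N := by omega
      have ihj := ih hjN'
      rw [if_neg hjneN] at ihj
      have hsys := hPR.2 j s (by omega) hjN
      have hinv := hHRinv (j + 1) (by omega) hjN
      have key : (HR (j + 1)).mulVec (PR (j + 1) s)
          = ((if s = 0 then pR N π (j + 1) else (Em N π (j + 1)).mulVec (P j (s - 1)))
              + (Dm1 N π (j + 1)).mulVec (hv j s))
            + (if j + 1 = N then 0 else (Dm2 N π (j + 1)).mulVec (PR (j + 2) s)) := by
        rw [hHRrec j hj hjN, Matrix.sub_mulVec, Matrix.sub_mulVec, Matrix.one_mulVec]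
        have hD : (Dm1 N π (j + 1)).mulVec (PR j s)
            = (Dm1 N π (j + 1)).mulVec (hv j s)
              + ((show Matrix (Fin (N - (j + 1) + 1)) (Fin (N - j + 1)) ℝ from
                  Dm1 N π (j + 1)) * (HR j)⁻¹ * Dm2 N π j).mulVec (PR (j + 1) s) := by
          rw [ihj, Matrix.mulVec_add]
          simp only [Matrix.mulVec_mulVec, Matrix.mul_assoc]
        by_cases h2 : j + 1 = N
        · simp only [if_pos h2] at hsys ⊢
          rw [Matrix.zero_mulVec]
          nth_rewrite 1 [hsys]
          rw [hD]
          abel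
        · simp only [if_neg h2] at hsys ⊢
          nth_rewrite 1 [hsys]
          rw [hD]
          abel
      rw [solve_mulVec hinv key, Matrix.mulVec_add, ← hvrec j s hj hjN]
      congr 1
      by_cases h2 : j + 1 = N
      · simp [h2]
      · simp only [if_neg h2, ← Matrix.mulVec_mulVec]
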